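/- The sequence of coefficients of (1 + x + ... + x^n)^d is log-concave: for all 1 ≤ k ≤ nd - 1, C_n(d,k)^2 ≥ C_n(d,k-1) · C_n(d,k+1), where C_n(d,k) is the coefficient of x^k. -/

import Mathlib

open Polynomial Finset

private noncomputable def Nc (n d : ℕ) (m : ℤ) : ℕ :=
  if 0 ≤ m then ((∑ i ∈ Finset.range (n + 1), (Polynomial.X : Polynomial ℕ) ^ i) ^ d).coeff m.toNat
  else 0

private lemma Nc_zero (n : ℕ) (m : ℤ) : Nc n 0 m = if m = 0 then 1 else 0 := by
  unfold Nc
  split_ifs with h1 h2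
  · subst h2; simp
  · rw [pow_zero, Polynomial.coeff_one, if_neg (by omega)]
  · omega
  · rfl

private lemma Nc_succ (n d : ℕ) (m : ℤ) :
    Nc n (d + 1) m = ∑ i ∈ Finset.range (n + 1), Nc n d (m - i) := by
  by_cases hm : 0 ≤ m
  · obtain ⟨a, rfl⟩ : ∃ a : ℕ, m = (a : ℤ) := ⟨m.toNat, (Int.toNat_of_nonneg hm).symm⟩
    rw [Nc, if_pos hm]
    simp only [Int.toNat_natCast]
    rw [pow_succ, Finset.mul_sum, Polynomial.finset_sum_coeff]
    refine Finset.sum_congr rfl fun i _ => ?_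
    rw [Polynomial.coeff_mul_X_pow']
    unfold Nc
    split_ifs with h1 h2 h2
    · congr 1
      omega
    · omega
    · omega
    · rfl
  · rw [Nc, if_neg hm]
    refine (Finset.sum_eq_zero fun i _ => ?_).symm
    rw [Nc, if_neg (by omega)]

private lemma spread_aux (f : ℤ → ℕ)
    (hstep : ∀ k l : ℤ, k ≤ l → f (k - 1) * f (l + 1) ≤ f k * f l) :
    ∀ (s : ℕ) (p q p' q' : ℤ), p' ≤ p → p' ≤ q → p + q = p' + q' → p - p' = s →
      f p' * f q' ≤ f p * f q := by
  intro s
  induction s with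
  | zero =>
    intro p q p' q' h1 h2 h3 h4
    have : p' = p := by omega
    subst this
    have : q' = q := by omega
    subst this
    exact le_refl _
  | succ s ih =>
    intro p q p' q' h1 h2 h3 h4
    by_cases hq : q ≤ p'
    · have : q = p' := le_antisymm hq h2
      subst this
      have : q' = p := by omega
      subst this
      rw [mul_comm]
    · have h5 : p' + 1 ≤ q' - 1 := by omega
      have step := hstep (p' + 1) (q' - 1) h5
      simp only [add_sub_cancel_right, sub_add_cancel] at step
      refine le_trans step (ih p q (p' + 1) (q' - 1) (by omega) (by omega) (by omega) (by omega))

private lemma spread (f : ℤ → ℕ)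
    (hstep : ∀ k l : ℤ, k ≤ l → f (k - 1) * f (l + 1) ≤ f k * f l)
    (p q p' q' : ℤ) (h1 : p' ≤ p) (h2 : p' ≤ q) (h3 : p + q = p' + q') :
    f p' * f q' ≤ f p * f q :=
  spread_aux f hstep (p - p').toNat p q p' q' h1 h2 h3 (by omega)

private lemma onestep (n d : ℕ) :
    ∀ k l : ℤ, k ≤ l → Nc n d (k - 1) * Nc n d (l + 1) ≤ Nc n d k * Nc n d l := by
  induction d with
  | zero =>
    intro k l hkl
    have : Nc n 0 (k - 1) * Nc n 0 (l + 1) = 0 := by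
      rw [Nc_zero, Nc_zero]
      split_ifs with h1 h2 <;> first | omega | simp
    rw [this]
    exact Nat.zero_le _
  | succ d ih =>
    intro k l hkl
    have hspread := spread (Nc n d) ih
    rw [Nc_succ, Nc_succ, Nc_succ, Nc_succ, Finset.sum_mul_sum, Finset.sum_mul_sum]
    rw [← Finset.sum_product', ← Finset.sum_product']
    set s := Finset.range (n + 1) ×ˢ Finset.range (n + 1) with hs
    set F : ℕ × ℕ → ℕ := fun x => Nc n d (k - x.1) * Nc n d (l - x.2) with hF
    set G : ℕ × ℕ → ℕ := fun x => Nc n d (k - 1 - x.1) * Nc n d (l + 1 - x.2) with hG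
    show ∑ x ∈ s, G x ≤ ∑ x ∈ s, F x
    set σ : ℕ × ℕ → ℕ × ℕ := fun x =>
      if x.2 = 0 then (0, x.1) else if x.1 = n then (x.2, n) else (x.1 + 1, x.2 - 1) with hσ
    set τ : ℕ × ℕ → ℕ × ℕ := fun x =>
      if x.1 = 0 then (x.2, 0) else if x.2 = n then (n, x.1) else (x.1 - 1, x.2 + 1) with hτ
    have key : ∑ x ∈ s, G x ≤ ∑ x ∈ s, F (σ x) := by
      refine Finset.sum_le_sum fun x hx => ?_
      obtain ⟨i, j⟩ := x
      simp only [hs, Finset.mem_product, Finset.mem_range] at hx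
      obtain ⟨hi, hj⟩ := hx
      simp only [hσ, hF, hG]
      by_cases hj0 : j = 0
      · subst hj0
        simp only [if_pos rfl]
        refine hspread (k - (0:ℕ)) (l - i) (k - 1 - i) (l + 1 - (0:ℕ)) ?_ ?_ ?_
        · push_cast; omega
        · push_cast; omega
        · push_cast; omega
      · rw [if_neg hj0]
        by_cases hin : i = n
        · rw [if_pos hin]
          refine hspread (k - (j:ℕ)) (l - (n:ℕ)) (k - 1 - i) (l + 1 - j) ?_ ?_ ?_
          · push_cast; omega
          · push_cast; omega
          · push_cast; omega
        · rw [if_neg hin]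
          have e1 : (k - 1 - (i:ℤ)) = k - ((i + 1 : ℕ) : ℤ) := by push_cast; ring
          have e2 : (l + 1 - (j:ℤ)) = l - ((j - 1 : ℕ) : ℤ) := by
            have : (((j - 1 : ℕ)) : ℤ) = (j : ℤ) - 1 := by omega
            rw [this]; ring
          rw [e1, e2]
    refine le_trans key (le_of_eq ?_)
    refine Finset.sum_nbij' σ τ ?_ ?_ ?_ ?_ ?_
    · intro x hx
      obtain ⟨i, j⟩ := x
      simp only [hs, Finset.mem_product, Finset.mem_range] at hx ⊢
      simp only [hσ]
      split_ifs <;> constructor <;> omega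
    · intro x hx
      obtain ⟨i, j⟩ := x
      simp only [hs, Finset.mem_product, Finset.mem_range] at hx ⊢
      simp only [hτ]
      split_ifs <;> constructor <;> omega
    · intro x hx
      obtain ⟨i, j⟩ := x
      simp only [hs, Finset.mem_product, Finset.mem_range] at hx
      simp only [hσ, hτ]
      split_ifs <;> simp_all <;> omega
    · intro x hx
      obtain ⟨i, j⟩ := x
      simp only [hs, Finset.mem_product, Finset.mem_range] at hx
      simp only [hσ, hτ]
      split_ifs <;> simp_all <;> omega
    · intro x hx
      rfl

theorem coeff_log_concave (n d k : ℕ) (hn : 1 ≤ n) (hd : 1 ≤ d)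
    (hk1 : 1 ≤ k) (hk2 : k ≤ n * d - 1) :
    ((∑ i ∈ Finset.range (n + 1), (Polynomial.X : Polynomial ℕ) ^ i) ^ d).coeff (k - 1) *
        ((∑ i ∈ Finset.range (n + 1), (Polynomial.X : Polynomial ℕ) ^ i) ^ d).coeff (k + 1) ≤
      ((∑ i ∈ Finset.range (n + 1), (Polynomial.X : Polynomial ℕ) ^ i) ^ d).coeff k ^ 2 := by
  have h := onestep n d k k le_rfl
  have e1 : Nc n d ((k : ℤ) - 1) =
      ((∑ i ∈ Finset.range (n + 1), (Polynomial.X : Polynomial ℕ) ^ i) ^ d).coeff (k - 1) := by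
    rw [Nc, if_pos (by omega)]
    congr 1 <;> omega
  have e2 : Nc n d ((k : ℤ) + 1) =
      ((∑ i ∈ Finset.range (n + 1), (Polynomial.X : Polynomial ℕ) ^ i) ^ d).coeff (k + 1) := by
    rw [Nc, if_pos (by omega)]
    congr 1 <;> omega
  have e3 : Nc n d (k : ℤ) =
      ((∑ i ∈ Finset.range (n + 1), (Polynomial.X : Polynomial ℕ) ^ i) ^ d).coeff k := by
    rw [Nc, if_pos (by omega)]
    congr 1 <;> omega
  rw [e1, e2, e3] at h
  rw [sq]
  exact h
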